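/- Fix η ∈ ℝ^m and assume there exist a neighbourhood U of η and an integrable function g with (1 + ‖s(x)‖²) e^{η'⬝s(x)} ≤ g(x) for all η' ∈ U and μ-a.e. x. Then the moment map ω(η') = ∫ s(x) e^{η'⬝s(x)} dμ(x) (equal to the gradient of the partition function η' ↦ Z_{η'} = ∫ e^{η'⬝s} dμ) is differentiable at η, and its Fréchet derivative at η is the linear map on ℝ^m given by the matrix ∫ s(x) s(x)ᵀ e^{η⬝s(x)} dμ(x) = Z_η F_η. -/

import Mathlib

open MeasureTheory Matrix

noncomputable section

/-- The continuous linear functional `v ↦ g ⬝ᵥ v` on `ℝ^m`, used to express gradients. -/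
def dotCLM {m : ℕ} (g : Fin m → ℝ) : (Fin m → ℝ) →L[ℝ] ℝ :=
  ∑ i, g i • ContinuousLinearMap.proj i

lemma dotCLM_apply {m : ℕ} (g v : Fin m → ℝ) : dotCLM g v = g ⬝ᵥ v := by
  simp [dotCLM, dotProduct]

lemma norm_dotCLM_le {m : ℕ} (g : Fin m → ℝ) : ‖dotCLM g‖ ≤ ∑ i, |g i| := by
  refine ContinuousLinearMap.opNorm_le_bound _
    (Finset.sum_nonneg fun i _ => abs_nonneg _) fun v => ?_
  rw [dotCLM_apply]
  calc ‖g ⬝ᵥ v‖ ≤ ∑ i, |g i * v i| := by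
        simpa [dotProduct, Real.norm_eq_abs] using
          Finset.abs_sum_le_sum_abs (fun i => g i * v i) Finset.univ
    _ ≤ ∑ i, |g i| * ‖v‖ := by
        refine Finset.sum_le_sum fun i _ => ?_
        rw [abs_mul]
        exact mul_le_mul_of_nonneg_left
          ((Real.norm_eq_abs (v i)) ▸ norm_le_pi_norm v i) (abs_nonneg _)
    _ = (∑ i, |g i|) * ‖v‖ := (Finset.sum_mul _ _ _).symm

lemma key {X : Type*} [MeasurableSpace X] (μ : Measure X)
    {m : ℕ} (s : X → Fin m → ℝ) (hs : Measurable s)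
    (η : Fin m → ℝ) (ε : ℝ) (hε : 0 < ε)
    (g : X → ℝ) (hg : Integrable g μ)
    (C : ℝ) (hC : 0 ≤ C)
    (φ : X → ℝ) (hφ : Measurable φ)
    (hφ1 : ∀ x, |φ x| ≤ 1 + ∑ i, s x i ^ 2)
    (hφ2 : ∀ x, |φ x| * ∑ j, |s x j| ≤ C * (1 + ∑ i, s x i ^ 2))
    (hdom : ∀ᵐ x ∂μ, ∀ η' ∈ Metric.ball η ε,
      (1 + ∑ i, s x i ^ 2) * Real.exp (η' ⬝ᵥ s x) ≤ g x) :
    HasFDerivAt (fun η' : Fin m → ℝ => ∫ x, φ x * Real.exp (η' ⬝ᵥ s x) ∂μ)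
      (dotCLM fun j => ∫ x, φ x * s x j * Real.exp (η ⬝ᵥ s x) ∂μ) η := by
  have hsi : ∀ i, Measurable fun x => s x i := fun i => (measurable_pi_apply i).comp hs
  have hdotm : ∀ η' : Fin m → ℝ, Measurable fun x => η' ⬝ᵥ s x := by
    intro η'
    simp only [dotProduct]
    exact Finset.measurable_sum _ fun i _ => measurable_const.mul (hsi i)
  have hFmeas : ∀ η' : Fin m → ℝ,
      AEStronglyMeasurable (fun x => φ x * Real.exp (η' ⬝ᵥ s x)) μ :=
    fun η' => (hφ.mul ((hdotm η').exp)).aestronglyMeasurable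
  have hone : ∀ x, (0:ℝ) ≤ 1 + ∑ i, s x i ^ 2 := fun x => by positivity
  -- the pointwise derivative
  set F' : (Fin m → ℝ) → X → (Fin m → ℝ) →L[ℝ] ℝ :=
    fun η' x => (φ x * Real.exp (η' ⬝ᵥ s x)) • dotCLM (s x) with hF'
  have h_deriv : ∀ (x : X) (η' : Fin m → ℝ),
      HasFDerivAt (fun η'' : Fin m → ℝ => φ x * Real.exp (η'' ⬝ᵥ s x)) (F' η' x) η' := by
    intro x η'
    have h1 : HasFDerivAt (fun η'' : Fin m → ℝ => η'' ⬝ᵥ s x) (dotCLM (s x)) η' := by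
      have h := (dotCLM (s x)).hasFDerivAt (x := η')
      have : ⇑(dotCLM (s x)) = fun η'' : Fin m → ℝ => η'' ⬝ᵥ s x := by
        funext v; rw [dotCLM_apply, dotProduct_comm]
      rwa [this] at h
    have h2 := h1.exp
    have h3 := h2.const_mul (φ x)
    simpa [hF', smul_smul, mul_comm] using h3
  -- the uniform bound on the derivative
  have h_bound : ∀ᵐ x ∂μ, ∀ η' ∈ Metric.ball η ε, ‖F' η' x‖ ≤ C * g x := by
    filter_upwards [hdom] with x hx η' hη'
    have he : (0:ℝ) < Real.exp (η' ⬝ᵥ s x) := Real.exp_pos _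
    have hb := hx η' hη'
    calc ‖F' η' x‖ ≤ |φ x * Real.exp (η' ⬝ᵥ s x)| * ‖dotCLM (s x)‖ := by
          simp only [hF']
          have h := norm_smul_le (φ x * Real.exp (η' ⬝ᵥ s x)) (dotCLM (s x))
          rwa [Real.norm_eq_abs] at h
      _ ≤ |φ x| * Real.exp (η' ⬝ᵥ s x) * ∑ j, |s x j| := by
          rw [abs_mul, abs_of_pos he]
          exact mul_le_mul_of_nonneg_left (norm_dotCLM_le _) (by positivity)
      _ = (|φ x| * ∑ j, |s x j|) * Real.exp (η' ⬝ᵥ s x) := by ring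
      _ ≤ (C * (1 + ∑ i, s x i ^ 2)) * Real.exp (η' ⬝ᵥ s x) := by
          exact mul_le_mul_of_nonneg_right (hφ2 x) he.le
      _ = C * ((1 + ∑ i, s x i ^ 2) * Real.exp (η' ⬝ᵥ s x)) := by ring
      _ ≤ C * g x := mul_le_mul_of_nonneg_left hb hC
  have hself : η ∈ Metric.ball η ε := Metric.mem_ball_self hε
  -- integrability of F at η
  have hF_int : Integrable (fun x => φ x * Real.exp (η ⬝ᵥ s x)) μ := by
    refine hg.mono (hFmeas η) ?_
    filter_upwards [hdom] with x hx
    have hb := hx η hself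
    have he : (0:ℝ) < Real.exp (η ⬝ᵥ s x) := Real.exp_pos _
    have h1 : |φ x * Real.exp (η ⬝ᵥ s x)| ≤ g x := by
      rw [abs_mul, abs_of_pos he]
      calc |φ x| * Real.exp (η ⬝ᵥ s x)
          ≤ (1 + ∑ i, s x i ^ 2) * Real.exp (η ⬝ᵥ s x) :=
            mul_le_mul_of_nonneg_right (hφ1 x) he.le
        _ ≤ g x := hb
    rw [Real.norm_eq_abs, Real.norm_eq_abs]
    exact h1.trans (le_abs_self _)
  -- measurability of F' η
  have hF'_meas : AEStronglyMeasurable (F' η) μ := by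
    have heq : F' η = fun x => ∑ i, (φ x * Real.exp (η ⬝ᵥ s x) * s x i) •
        (ContinuousLinearMap.proj i : (Fin m → ℝ) →L[ℝ] ℝ) := by
      funext x
      rw [hF']
      simp only [dotCLM, Finset.smul_sum, smul_smul]
    rw [heq]
    exact Finset.aestronglyMeasurable_fun_sum _ fun i _ =>
      (((hφ.mul ((hdotm η).exp)).mul (hsi i)).aestronglyMeasurable).smul_const
        (ContinuousLinearMap.proj i : (Fin m → ℝ) →L[ℝ] ℝ)
  have hF'_int : Integrable (F' η) μ := by
    refine (hg.const_mul C).mono' hF'_meas ?_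
    filter_upwards [h_bound] with x hx
    exact hx η hself
  have hI := hasFDerivAt_integral_of_dominated_of_fderiv_le (F' := F') (Metric.ball_mem_nhds η hε)
    (Filter.Eventually.of_forall hFmeas) hF_int hF'_meas h_bound (hg.const_mul C)
    (by filter_upwards with x; exact fun η' _ => h_deriv x η')
  -- integrability of each component integrand
  have hInt2 : ∀ j, Integrable (fun x => φ x * s x j * Real.exp (η ⬝ᵥ s x)) μ := by
    intro j
    refine (hg.const_mul C).mono
      (((hφ.mul (hsi j)).mul ((hdotm η).exp)).aestronglyMeasurable) ?_
    filter_upwards [hdom] with x hx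
    have hb := hx η hself
    have he : (0:ℝ) < Real.exp (η ⬝ᵥ s x) := Real.exp_pos _
    have habs : |s x j| ≤ ∑ i, |s x i| :=
      Finset.single_le_sum (f := fun i => |s x i|) (fun i _ => abs_nonneg _)
        (Finset.mem_univ j)
    have h1 : |φ x * s x j * Real.exp (η ⬝ᵥ s x)| ≤ C * g x := by
      rw [abs_mul, abs_mul, abs_of_pos he]
      calc |φ x| * |s x j| * Real.exp (η ⬝ᵥ s x)
          ≤ (|φ x| * ∑ i, |s x i|) * Real.exp (η ⬝ᵥ s x) := by
            have := mul_le_mul_of_nonneg_left habs (abs_nonneg (φ x))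
            exact mul_le_mul_of_nonneg_right this he.le
        _ ≤ (C * (1 + ∑ i, s x i ^ 2)) * Real.exp (η ⬝ᵥ s x) :=
            mul_le_mul_of_nonneg_right (hφ2 x) he.le
        _ = C * ((1 + ∑ i, s x i ^ 2) * Real.exp (η ⬝ᵥ s x)) := by ring
        _ ≤ C * g x := mul_le_mul_of_nonneg_left hb hC
    rw [Real.norm_eq_abs, Real.norm_eq_abs]
    exact h1.trans (le_abs_self _)
  -- identify the derivative
  have heq : (∫ x, F' η x ∂μ) = dotCLM fun j => ∫ x, φ x * s x j * Real.exp (η ⬝ᵥ s x) ∂μ := by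
    refine ContinuousLinearMap.ext fun v => ?_
    rw [ContinuousLinearMap.integral_apply hF'_int, dotCLM_apply]
    have h1 : ∀ x, (F' η x) v = ∑ j, (φ x * s x j * Real.exp (η ⬝ᵥ s x)) * v j := by
      intro x
      rw [hF']
      simp only [ContinuousLinearMap.coe_smul', Pi.smul_apply, dotCLM_apply, smul_eq_mul,
        dotProduct, Finset.mul_sum]
      exact Finset.sum_congr rfl fun j _ => by ring
    simp_rw [h1]
    rw [integral_finset_sum _ fun j _ => (hInt2 j).mul_const (v j)]
    simp_rw [dotProduct]
    exact Finset.sum_congr rfl fun j _ => integral_mul_const _ _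
  rwa [heq] at hI

/-- If `(1 + ‖s(x)‖²) e^{η'⬝s(x)} ≤ g(x)` for all `η'` in a neighbourhood
of `η` with `g` integrable, then the moment map `ω(η') = ∫ s e^{η'⬝s} dμ` (which is the
gradient of the partition function `η' ↦ Z_{η'}`) is differentiable at `η`, with Fréchet
derivative the linear map given by the matrix `∫ s sᵀ e^{η⬝s} dμ = Z_η F_η`. -/
theorem stmt6
    {X : Type*} [MeasurableSpace X] (μ : Measure X)
    {m : ℕ} (s : X → Fin m → ℝ) (hs : Measurable s)
    (η : Fin m → ℝ)
    (U : Set (Fin m → ℝ)) (hU : U ∈ nhds η)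
    (g : X → ℝ) (hg : Integrable g μ)
    (hdom : ∀ η' ∈ U, ∀ᵐ x ∂μ,
      (1 + ∑ i, (s x i) ^ 2) * Real.exp (η' ⬝ᵥ s x) ≤ g x) :
    -- the moment map is the gradient of the partition function at `η`
    HasFDerivAt (fun η' : Fin m → ℝ => ∫ x, Real.exp (η' ⬝ᵥ s x) ∂μ)
      (dotCLM fun i => ∫ x, s x i * Real.exp (η ⬝ᵥ s x) ∂μ) η
    ∧
    -- the moment map is differentiable at `η` with derivative the matrix `∫ s sᵀ q_η dμ`
    HasFDerivAt (fun η' : Fin m → ℝ => fun i => ∫ x, s x i * Real.exp (η' ⬝ᵥ s x) ∂μ)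
      (LinearMap.toContinuousLinearMap
        (Matrix.mulVecLin
          (Matrix.of fun i j => ∫ x, s x i * s x j * Real.exp (η ⬝ᵥ s x) ∂μ))) η := by
  obtain ⟨ε, hε, hball⟩ := Metric.mem_nhds_iff.1 hU
  -- swap the a.e. quantifier using a countable dense subset
  obtain ⟨D, hDc, hDd⟩ := TopologicalSpace.exists_countable_dense (Fin m → ℝ)
  set D' : Set (Fin m → ℝ) := Metric.ball η ε ∩ D with hD'
  have hD'c : D'.Countable := hDc.mono Set.inter_subset_right
  have hsubcl : Metric.ball η ε ⊆ closure D' := hDd.open_subset_closure_inter Metric.isOpen_ball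
  have hdomD : ∀ᵐ x ∂μ, ∀ η' ∈ D',
      (1 + ∑ i, s x i ^ 2) * Real.exp (η' ⬝ᵥ s x) ≤ g x :=
    (ae_ball_iff hD'c).2 fun η' hη' => hdom η' (hball hη'.1)
  have hdom' : ∀ᵐ x ∂μ, ∀ η' ∈ Metric.ball η (ε / 2),
      (1 + ∑ i, s x i ^ 2) * Real.exp (η' ⬝ᵥ s x) ≤ g x := by
    filter_upwards [hdomD] with x hx η' hη'
    have hcont : Continuous fun η'' : Fin m → ℝ =>
        (1 + ∑ i, s x i ^ 2) * Real.exp (η'' ⬝ᵥ s x) := by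
      apply continuous_const.mul
      exact Real.continuous_exp.comp
        (continuous_finset_sum _ fun i _ => (continuous_apply i).mul continuous_const)
    have hclosed : IsClosed {η'' : Fin m → ℝ |
        (1 + ∑ i, s x i ^ 2) * Real.exp (η'' ⬝ᵥ s x) ≤ g x} :=
      isClosed_le hcont continuous_const
    have hsub : closure D' ⊆ {η'' : Fin m → ℝ |
        (1 + ∑ i, s x i ^ 2) * Real.exp (η'' ⬝ᵥ s x) ≤ g x} :=
      closure_minimal (fun η'' hη'' => hx η'' hη'') hclosed
    exact hsub (hsubcl (Metric.ball_subset_ball (by linarith) hη'))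
  have hε2 : (0:ℝ) < ε / 2 := by linarith
  have habs2 : ∀ t : ℝ, |t| ≤ (1 + t ^ 2) / 2 := fun t => by
    nlinarith [sq_nonneg (|t| - 1), sq_abs t]
  have hsumabs : ∀ x, (∑ j, |s x j|) ≤ ((m : ℝ) + ∑ i, s x i ^ 2) / 2 := by
    intro x
    calc (∑ j, |s x j|) ≤ ∑ j, (1 + s x j ^ 2) / 2 :=
          Finset.sum_le_sum fun j _ => habs2 _
      _ = ((m : ℝ) + ∑ i, s x i ^ 2) / 2 := by
          rw [← Finset.sum_div, Finset.sum_add_distrib]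
          simp
  have hsq : ∀ x, (0:ℝ) ≤ ∑ i, s x i ^ 2 := fun x =>
    Finset.sum_nonneg fun i _ => sq_nonneg _
  constructor
  · have h := key μ s hs η (ε / 2) hε2 g hg ((m : ℝ) + 1) (by positivity)
      (fun _ => 1) measurable_const
      (fun x => by simp; positivity)
      (fun x => by
        have h1 := hsumabs x
        have h2 := hsq x
        rw [abs_one, one_mul]
        nlinarith)
      hdom'
    simpa using h
  · apply hasFDerivAt_pi''
    intro i
    have h := key μ s hs η (ε / 2) hε2 g hg ((m : ℝ) + 1) (by positivity)
      (fun x => s x i) ((measurable_pi_apply i).comp hs)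
      (fun x => by
        have h1 := habs2 (s x i)
        have h2 : s x i ^ 2 ≤ ∑ j, s x j ^ 2 :=
          Finset.single_le_sum (f := fun j => s x j ^ 2) (fun j _ => sq_nonneg _)
            (Finset.mem_univ i)
        have h3 := hsq x
        nlinarith)
      (fun x => by
        have h2 : s x i ^ 2 ≤ ∑ j, s x j ^ 2 :=
          Finset.single_le_sum (f := fun j => s x j ^ 2) (fun j _ => sq_nonneg _)
            (Finset.mem_univ i)
        have h3 := hsq x
        have hm : (0:ℝ) ≤ (m : ℝ) := Nat.cast_nonneg m
        have h1 : |s x i| * ∑ j, |s x j| ≤ ∑ j, (s x i ^ 2 + s x j ^ 2) / 2 := by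
          rw [Finset.mul_sum]
          refine Finset.sum_le_sum fun j _ => ?_
          nlinarith [sq_nonneg (|s x i| - |s x j|), sq_abs (s x i), sq_abs (s x j),
            abs_nonneg (s x i), abs_nonneg (s x j)]
        have h4 : (∑ j : Fin m, (s x i ^ 2 + s x j ^ 2) / 2)
            = ((m : ℝ) * s x i ^ 2 + ∑ j, s x j ^ 2) / 2 := by
          rw [← Finset.sum_div, Finset.sum_add_distrib]
          simp [Finset.sum_const, Finset.card_univ, nsmul_eq_mul]
        rw [h4] at h1
        have h5 : (m : ℝ) * s x i ^ 2 ≤ (m : ℝ) * ∑ j, s x j ^ 2 :=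
          mul_le_mul_of_nonneg_left h2 hm
        nlinarith)
      hdom'
    refine h.congr_fderiv ?_
    refine ContinuousLinearMap.ext fun v => ?_
    simp [dotCLM_apply, Matrix.mulVecLin_apply, Matrix.mulVec, dotProduct]
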